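/- Let d ≥ 1, let x, y ∈ ℝ^d with x ≠ y, and let S, T ∈ ℝ^{d×d} with T invertible. Set z = x − y, e = z/|z|, u = (T⁻¹z)/|T⁻¹z|, H = I − 2uuᵀ, Δ = S − T, and α = S − TH. Then tr(ααᵀ) − |αᵀe|² = tr(ΔΔᵀ) − |Δᵀe|². -/

import Mathlib

open scoped Matrix

/-- Action of a `d × d` real matrix on `EuclideanSpace ℝ (Fin d)`. -/
noncomputable def matVec {d : ℕ} (S : Matrix (Fin d) (Fin d) ℝ)
    (x : EuclideanSpace ℝ (Fin d)) : EuclideanSpace ℝ (Fin d) :=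
  Matrix.toEuclideanCLM (𝕜 := ℝ) S x

private lemma normsq_eq_sum {d : ℕ} (v : EuclideanSpace ℝ (Fin d)) :
    ‖v‖ ^ 2 = ∑ i, v i ^ 2 := by
  rw [EuclideanSpace.norm_eq, Real.sq_sqrt (by positivity)]
  simp [sq_abs]

private lemma trace_mul_transpose_eq {d : ℕ} (M : Matrix (Fin d) (Fin d) ℝ) :
    Matrix.trace (M * Mᵀ) = ∑ i, ∑ j, M i j ^ 2 := by
  simp [Matrix.trace, Matrix.mul_apply, Matrix.diag, sq]

/-- **Lemma "A bound", part (i)**: with `z = x − y`, `e = z/|z|`,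
`u = T⁻¹z/|T⁻¹z|`, `H = I − 2uuᵀ`, `Δ = S − T`, `α = S − TH`, one has
`tr(ααᵀ) − |αᵀe|² = tr(ΔΔᵀ) − |Δᵀe|²`. -/
theorem reflection_coupling_trace_identity
    {d : ℕ} (hd : 1 ≤ d) (x y : EuclideanSpace ℝ (Fin d)) (hxy : x ≠ y)
    (S T : Matrix (Fin d) (Fin d) ℝ) (hT : IsUnit T)
    (z e u : EuclideanSpace ℝ (Fin d)) (H Δ α : Matrix (Fin d) (Fin d) ℝ)
    (hz : z = x - y)
    (he : e = ‖z‖⁻¹ • z)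
    (hu : u = ‖matVec T⁻¹ z‖⁻¹ • matVec T⁻¹ z)
    (hH : H = 1 - (2 : ℝ) • Matrix.vecMulVec (fun i => u i) (fun i => u i))
    (hΔ : Δ = S - T)
    (hα : α = S - T * H) :
    Matrix.trace (α * αᵀ) - ‖matVec αᵀ e‖ ^ 2
      = Matrix.trace (Δ * Δᵀ) - ‖matVec Δᵀ e‖ ^ 2 := by
  -- basic nonvanishing facts
  have hz0 : z ≠ 0 := by
    rw [hz]; exact sub_ne_zero_of_ne hxy
  have hzn : ‖z‖ ≠ 0 := norm_ne_zero_iff.mpr hz0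
  set w : EuclideanSpace ℝ (Fin d) := matVec T⁻¹ z with hw
  have hdet : IsUnit T.det := (Matrix.isUnit_iff_isUnit_det T).mp hT
  have hTT : T * T⁻¹ = 1 := Matrix.mul_nonsing_inv T hdet
  -- T applied to w recovers z
  have hTw : ∀ i, ∑ l, T i l * w l = z i := by
    intro i
    have h1 : (T *ᵥ (T⁻¹ *ᵥ fun j => z j)) i = z i := by
      rw [Matrix.mulVec_mulVec, hTT, Matrix.one_mulVec]
    have hwl : ∀ l, w l = ∑ j, T⁻¹ l j * z j := fun l => rfl
    simpa [Matrix.mulVec, dotProduct, hwl] using h1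
  have hw0 : w ≠ 0 := by
    intro h0
    apply hz0
    ext i
    have : ∑ l, T i l * w l = z i := hTw i
    rw [h0] at this
    simpa using this.symm
  have hwn : ‖w‖ ≠ 0 := norm_ne_zero_iff.mpr hw0
  -- coordinates of e and u
  have he_i : ∀ i, e i = ‖z‖⁻¹ * z i := by
    intro i; rw [he]; rfl
  have hu_i : ∀ i, u i = ‖w‖⁻¹ * w i := by
    intro i; rw [hu]; rfl
  -- unit norms
  have hse : ∑ i, e i ^ 2 = 1 := by
    rw [← normsq_eq_sum, he, norm_smul]
    rw [norm_inv, norm_norm]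
    field_simp
  have hsu : ∑ i, u i ^ 2 = 1 := by
    rw [← normsq_eq_sum, hu, norm_smul]
    rw [norm_inv, norm_norm]
    field_simp
  -- the key entrywise formula for α
  set k : ℝ := 2 * ‖z‖ * ‖w‖⁻¹ with hk
  have hsumTu : ∀ i, ∑ l, T i l * u l = ‖w‖⁻¹ * z i := by
    intro i
    have : ∀ l, T i l * u l = ‖w‖⁻¹ * (T i l * w l) := by
      intro l; rw [hu_i l]; ring
    simp only [this, ← Finset.mul_sum, hTw i]
  have hαij : ∀ i j, α i j = Δ i j + k * e i * u j := by
    intro i j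
    have hTH : (T * H) i j = T i j - 2 * (∑ l, T i l * u l) * u j := by
      simp only [hH, Matrix.mul_apply, Matrix.sub_apply, Matrix.smul_apply,
        Matrix.vecMulVec_apply, smul_eq_mul]
      have h2 : ∀ l, T i l * ((1 : Matrix (Fin d) (Fin d) ℝ) l j - 2 * (u l * u j))
          = T i l * (1 : Matrix (Fin d) (Fin d) ℝ) l j - (2 * u j) * (T i l * u l) := by
        intro l; ring
      simp only [h2, Finset.sum_sub_distrib, ← Finset.mul_sum]
      have h3 : ∑ l, T i l * (1 : Matrix (Fin d) (Fin d) ℝ) l j = T i j := by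
        simp [Matrix.one_apply, mul_ite]
      rw [h3]; ring
    have hzi : z i = ‖z‖ * e i := by
      rw [he_i i]; field_simp
    rw [hα, hΔ, Matrix.sub_apply, Matrix.sub_apply, hTH, hsumTu i, hzi, hk]
    ring
  -- coordinates of αᵀ e
  have hαe : ∀ i, matVec αᵀ e i = (matVec Δᵀ e i) + k * u i := by
    intro i
    show ∑ j, α j i * e j = (∑ j, Δ j i * e j) + k * u i
    calc ∑ j, α j i * e j
        = ∑ j, (Δ j i * e j + (k * u i) * e j ^ 2) := by
          refine Finset.sum_congr rfl fun j _ => ?_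
          rw [hαij j i]; ring
      _ = (∑ j, Δ j i * e j) + (k * u i) * ∑ j, e j ^ 2 := by
          rw [Finset.sum_add_distrib, Finset.mul_sum]
      _ = (∑ j, Δ j i * e j) + k * u i := by rw [hse]; ring
  -- cross term
  set X : ℝ := ∑ i, ∑ j, Δ i j * e i * u j with hX
  -- trace identity
  have htrα : Matrix.trace (α * αᵀ) = Matrix.trace (Δ * Δᵀ) + 2 * k * X + k ^ 2 := by
    rw [trace_mul_transpose_eq, trace_mul_transpose_eq]
    calc ∑ i, ∑ j, α i j ^ 2
        = ∑ i, ∑ j, (Δ i j ^ 2 + (2 * k) * (Δ i j * e i * u j)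
            + k ^ 2 * (e i ^ 2 * u j ^ 2)) := by
          refine Finset.sum_congr rfl fun i _ => Finset.sum_congr rfl fun j _ => ?_
          rw [hαij i j]; ring
      _ = (∑ i, ∑ j, Δ i j ^ 2) + (2 * k) * X
            + k ^ 2 * ((∑ i, e i ^ 2) * (∑ j, u j ^ 2)) := by
          simp only [Finset.sum_add_distrib, ← Finset.mul_sum, hX,
            Finset.sum_mul_sum]
      _ = (∑ i, ∑ j, Δ i j ^ 2) + 2 * k * X + k ^ 2 := by
          rw [hse, hsu]; ring
  -- norm identity
  have hnα : ‖matVec αᵀ e‖ ^ 2 = ‖matVec Δᵀ e‖ ^ 2 + 2 * k * X + k ^ 2 := by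
    rw [normsq_eq_sum, normsq_eq_sum]
    have hXswap : ∑ i, u i * matVec Δᵀ e i = X := by
      have : ∀ i, u i * matVec Δᵀ e i = ∑ j, Δ j i * e j * u i := by
        intro i
        show u i * ∑ j, Δ j i * e j = _
        rw [Finset.mul_sum]
        exact Finset.sum_congr rfl fun j _ => by ring
      rw [hX]
      simp only [this]
      rw [Finset.sum_comm]
    calc ∑ i, (matVec αᵀ e i) ^ 2
        = ∑ i, ((matVec Δᵀ e i) ^ 2 + (2 * k) * (u i * matVec Δᵀ e i)
            + k ^ 2 * u i ^ 2) := by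
          refine Finset.sum_congr rfl fun i _ => ?_
          rw [hαe i]; ring
      _ = (∑ i, (matVec Δᵀ e i) ^ 2) + (2 * k) * (∑ i, u i * matVec Δᵀ e i)
            + k ^ 2 * ∑ i, u i ^ 2 := by
          simp only [Finset.sum_add_distrib, ← Finset.mul_sum]
      _ = (∑ i, (matVec Δᵀ e i) ^ 2) + 2 * k * X + k ^ 2 := by
          rw [hXswap, hsu]; ring
  rw [htrα, hnα]
  ring
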